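/- Let ε_1, ε_2, … , ε_{2d} be i.i.d. real random variables, let G be the distribution function of |ε_1|, and define the block maximum of sliding minima M := max_{j ∈ {1,…,d}} min_{i ∈ {j,…,j+d}} |ε_i|. Then for every x > 0, P{M > x} = (1 − G(x))^{d+1} + (d−1) G(x) (1 − G(x))^{d+1}, and consequently P{M > x} ≤ (1 + d G(x)) (1 − G(x))^{d}. -/

import Mathlib

open MeasureTheory Filter Set ProbabilityTheory

noncomputable section

/-- **Tail bound for block maxima of sliding minima** (key step in the proof of Lemma A.2):
if `ε_1, …, ε_{2d}` are i.i.d. with `G` the cdf of `|ε_1|`, and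
`M = max_{1 ≤ j ≤ d} min_{j ≤ i ≤ j+d} |ε_i|`, then for every `x > 0`
`P{M > x} = (1−G(x))^{d+1} + (d−1) G(x) (1−G(x))^{d+1}`, and consequently
`P{M > x} ≤ (1 + d G(x)) (1−G(x))^d`. -/
theorem block_maximum_of_sliding_minima_tail
    {Ω : Type*} [MeasurableSpace Ω] (μ : Measure Ω) [IsProbabilityMeasure μ]
    (d : ℕ) (hd : 1 ≤ d)
    (ε : ℕ → Ω → ℝ) (hmeas : ∀ i, Measurable (ε i))
    -- i.i.d.
    (hindep : iIndepFun ε μ)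
    (hident : ∀ i, Measure.map (ε i) μ = Measure.map (ε 1) μ)
    -- G is the distribution function of |ε_1|
    (G : ℝ → ℝ) (hG0 : ∀ x, 0 ≤ G x)
    (hG : ∀ x : ℝ, μ {ω | |ε 1 ω| ≤ x} = ENNReal.ofReal (G x)) :
    ∀ x : ℝ, 0 < x →
      μ {ω | ∃ j ∈ Finset.Icc 1 d, ∀ i ∈ Finset.Icc j (j + d), x < |ε i ω|}
          = ENNReal.ofReal
              ((1 - G x) ^ (d + 1) + ((d : ℝ) - 1) * G x * (1 - G x) ^ (d + 1)) ∧
      μ {ω | ∃ j ∈ Finset.Icc 1 d, ∀ i ∈ Finset.Icc j (j + d), x < |ε i ω|}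
          ≤ ENNReal.ofReal ((1 + (d : ℝ) * G x) * (1 - G x) ^ d) := by
  intro x hx
  set g := G x with hgdef
  have hg0 : 0 ≤ g := hG0 x
  set Sle : Set ℝ := {y | |y| ≤ x} with hSledef
  set Sgt : Set ℝ := {y | x < |y|} with hSgtdef
  have hSlem : MeasurableSet Sle := measurable_abs measurableSet_Iic
  have hSgtm : MeasurableSet Sgt := measurable_abs measurableSet_Ioi
  have hle : ∀ i, μ ((ε i) ⁻¹' Sle) = ENNReal.ofReal g := by
    intro i
    have h1 : μ ((ε i) ⁻¹' Sle) = (μ.map (ε i)) Sle :=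
      (Measure.map_apply (hmeas i) hSlem).symm
    rw [h1, hident i, Measure.map_apply (hmeas 1) hSlem]
    exact hG x
  have hg1 : g ≤ 1 := by
    have h := hle 1
    have h2 : ENNReal.ofReal g ≤ 1 := h ▸ prob_le_one
    exact ENNReal.ofReal_le_one.mp h2
  have h1g : (0:ℝ) ≤ 1 - g := by linarith
  have hgt : ∀ i, μ ((ε i) ⁻¹' Sgt) = ENNReal.ofReal (1 - g) := by
    intro i
    have hc : (ε i) ⁻¹' Sgt = ((ε i) ⁻¹' Sle)ᶜ := by
      ext ω; simp [hSledef, hSgtdef, not_le]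
    rw [hc, measure_compl ((hmeas i) hSlem) (measure_ne_top μ _), hle i, measure_univ,
      ENNReal.ofReal_sub 1 hg0, ENNReal.ofReal_one]
  have hprod : ∀ (S : Finset ℕ) (f : ℕ → Set ℝ), (∀ i ∈ S, MeasurableSet (f i)) →
      μ (⋂ i ∈ S, (ε i) ⁻¹' f i) = ∏ i ∈ S, μ ((ε i) ⁻¹' f i) :=
    fun S f hf => hindep.measure_inter_preimage_eq_mul S hf
  set B : ℕ → Set Ω := fun j => ⋂ i ∈ Finset.Icc j (j + d), (ε i) ⁻¹' Sgt with hBdef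
  have hBmem : ∀ j ω, ω ∈ B j ↔ ∀ i ∈ Finset.Icc j (j + d), x < |ε i ω| := by
    intro j ω; simp [hBdef, hSgtdef]
  set C : ℕ → Set Ω := fun j => if j = 1 then B 1 else B j ∩ (ε (j-1)) ⁻¹' Sle with hCdef
  have hBm : ∀ j, MeasurableSet (B j) :=
    fun j => Finset.measurableSet_biInter _ (fun i _ => (hmeas i) hSgtm)
  have hCm : ∀ j, MeasurableSet (C j) := by
    intro j
    by_cases h : j = 1
    · simp only [hCdef, if_pos h]; exact hBm 1
    · simp only [hCdef, if_neg h]; exact (hBm j).inter ((hmeas (j-1)) hSlem)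
  have hCsub : ∀ j, C j ⊆ B j := by
    intro j
    by_cases h : j = 1
    · subst h; simp only [hCdef, if_pos rfl]; exact subset_rfl
    · simp only [hCdef, if_neg h]; exact Set.inter_subset_left
  -- the target set equals the union of the B j
  have hA : {ω | ∃ j ∈ Finset.Icc 1 d, ∀ i ∈ Finset.Icc j (j + d), x < |ε i ω|}
      = ⋃ j ∈ Finset.Icc 1 d, B j := by
    ext ω
    simp only [Set.mem_setOf_eq, Set.mem_iUnion, hBmem, exists_prop]
  -- union of B's equals union of C's
  have hunion : (⋃ j ∈ Finset.Icc 1 d, B j) = ⋃ j ∈ Finset.Icc 1 d, C j := by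
    apply Set.Subset.antisymm
    · intro ω hω
      simp only [Set.mem_iUnion, exists_prop] at hω ⊢
      have hex : ∃ j, j ∈ Finset.Icc 1 d ∧ ω ∈ B j := by
        obtain ⟨j, hj, hωj⟩ := hω; exact ⟨j, hj, hωj⟩
      classical
      obtain ⟨k, hkdef⟩ : ∃ k, Nat.find hex = k := ⟨_, rfl⟩
      have hspec := Nat.find_spec hex
      rw [hkdef] at hspec
      obtain ⟨hkmem, hkB⟩ := hspec
      by_cases hk1 : k = 1
      · refine ⟨1, Finset.mem_Icc.mpr ⟨le_refl 1, hd⟩, ?_⟩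
        simp only [hCdef, if_pos rfl]; rw [← hk1]; exact hkB
      · have hk2 : 2 ≤ k := by
          simp only [Finset.mem_Icc] at hkmem; omega
        refine ⟨k, hkmem, ?_⟩
        simp only [hCdef, if_neg hk1]
        refine ⟨hkB, ?_⟩
        -- show |ε (k-1) ω| ≤ x
        by_contra hcon
        simp only [Set.mem_preimage, hSledef, Set.mem_setOf_eq, not_le] at hcon
        have hBk1 : ω ∈ B (k-1) := by
          rw [hBmem]
          intro i hi
          simp only [Finset.mem_Icc] at hi
          by_cases hik : i = k - 1
          · subst hik; exact hcon
          · have : i ∈ Finset.Icc k (k + d) := by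
              simp only [Finset.mem_Icc]; omega
            exact (hBmem k ω).mp hkB i this
        have hkmem' := Finset.mem_Icc.mp hkmem
        have hmem : k - 1 ∈ Finset.Icc 1 d := Finset.mem_Icc.mpr (by omega)
        have hlt : k - 1 < Nat.find hex := by rw [hkdef]; omega
        exact Nat.find_min hex hlt ⟨hmem, hBk1⟩
    · intro ω hω
      simp only [Set.mem_iUnion, exists_prop] at hω ⊢
      obtain ⟨j, hj, hωj⟩ := hω
      exact ⟨j, hj, hCsub j hωj⟩
  -- pairwise disjointness of the C's
  have hdisj0 : ∀ j k, 1 ≤ j → j < k → k ≤ d → Disjoint (C j) (C k) := by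
    intro j k hj hjk hkd
    rw [Set.disjoint_left]
    intro ω hωj hωk
    have hωBj : ω ∈ B j := hCsub j hωj
    have hk1 : k ≠ 1 := by omega
    simp only [hCdef, if_neg hk1] at hωk
    have hωkle : |ε (k-1) ω| ≤ x := hωk.2
    have : x < |ε (k-1) ω| := by
      refine (hBmem j ω).mp hωBj (k-1) ?_
      simp only [Finset.mem_Icc]; omega
    linarith
  have hdisj : (↑(Finset.Icc 1 d) : Set ℕ).PairwiseDisjoint C := by
    intro j hj k hk hjk
    simp only [Finset.coe_Icc, Set.mem_Icc] at hj hk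
    rcases lt_or_gt_of_ne hjk with h | h
    · exact hdisj0 j k hj.1 h hk.2
    · exact (hdisj0 k j hk.1 h hj.2).symm
  -- measure of C 1
  have hC1 : μ (C 1) = ENNReal.ofReal ((1 - g) ^ (d + 1)) := by
    have h1 : C 1 = ⋂ i ∈ Finset.Icc 1 (1 + d), (ε i) ⁻¹' Sgt := by
      simp only [hCdef, if_pos rfl, hBdef]
    have hcard : (Finset.Icc 1 (1 + d)).card = d + 1 := by rw [Nat.card_Icc]; omega
    rw [h1, hprod _ _ (fun i _ => hSgtm),
      Finset.prod_congr rfl (fun i _ => hgt i), Finset.prod_const, hcard,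
      ← ENNReal.ofReal_pow h1g]
  -- measure of C j for 2 ≤ j ≤ d
  have hCj : ∀ j, 2 ≤ j → μ (C j) = ENNReal.ofReal (g * (1 - g) ^ (d + 1)) := by
    intro j hj2
    have hj1 : j ≠ 1 := by omega
    have hnot : j - 1 ∉ Finset.Icc j (j + d) := by
      simp only [Finset.mem_Icc]; omega
    set f : ℕ → Set ℝ := fun i => if i = j - 1 then Sle else Sgt with hfdef
    have hCeq : C j = ⋂ i ∈ insert (j-1) (Finset.Icc j (j + d)), (ε i) ⁻¹' f i := by
      ext ω
      simp only [hCdef, if_neg hj1, hBdef, hfdef, Set.mem_inter_iff, Set.mem_iInter,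
        Finset.mem_insert, Set.mem_preimage]
      constructor
      · rintro ⟨hB, hle'⟩ i hi
        rcases hi with rfl | hi
        · simpa using hle'
        · have hne : i ≠ j - 1 := by
            have := Finset.mem_Icc.mp hi; omega
          rw [if_neg hne]; exact hB i hi
      · intro h
        constructor
        · intro i hi
          have hne : i ≠ j - 1 := by
            have := Finset.mem_Icc.mp hi; omega
          have h' := h i (Or.inr hi)
          rwa [if_neg hne] at h'
        · have h' := h (j-1) (Or.inl rfl)
          simpa using h'
    rw [hCeq, hprod _ _ (fun i _ => by by_cases h : i = j - 1 <;> simp [hfdef, h, hSlem, hSgtm])]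
    rw [Finset.prod_insert hnot]
    have h1 : μ ((ε (j-1)) ⁻¹' f (j-1)) = ENNReal.ofReal g := by
      simp only [hfdef, if_pos rfl]; exact hle (j-1)
    have h2 : ∏ i ∈ Finset.Icc j (j + d), μ ((ε i) ⁻¹' f i)
        = ENNReal.ofReal ((1 - g) ^ (d + 1)) := by
      have hstep : ∀ i ∈ Finset.Icc j (j + d), μ ((ε i) ⁻¹' f i) = ENNReal.ofReal (1 - g) := by
        intro i hi
        have hne : i ≠ j - 1 := by
          have := Finset.mem_Icc.mp hi; omega
        simp only [hfdef, if_neg hne]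
        exact hgt i
      have hcard : (Finset.Icc j (j + d)).card = d + 1 := by rw [Nat.card_Icc]; omega
      rw [Finset.prod_congr rfl hstep, Finset.prod_const, hcard, ← ENNReal.ofReal_pow h1g]
    rw [h1, h2, ← ENNReal.ofReal_mul hg0]
  -- put it together
  have hmain : μ {ω | ∃ j ∈ Finset.Icc 1 d, ∀ i ∈ Finset.Icc j (j + d), x < |ε i ω|}
      = ENNReal.ofReal ((1 - g) ^ (d + 1) + ((d : ℝ) - 1) * g * (1 - g) ^ (d + 1)) := by
    rw [hA, hunion, measure_biUnion_finset hdisj (fun j _ => hCm j)]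
    have h1d : Finset.Icc 1 d = insert 1 (Finset.Icc 2 d) := by
      ext i; simp only [Finset.mem_Icc, Finset.mem_insert]; omega
    rw [h1d, Finset.sum_insert (by simp [Finset.mem_Icc])]
    rw [hC1, Finset.sum_congr rfl (fun j hj => hCj j (Finset.mem_Icc.mp hj).1),
      Finset.sum_const, Nat.card_Icc, nsmul_eq_mul]
    have hcast : ((d + 1 - 2 : ℕ) : ENNReal) = ENNReal.ofReal ((d:ℝ) - 1) := by
      rw [← ENNReal.ofReal_natCast]
      congr 1
      have h21 : d + 1 - 2 = d - 1 := by omega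
      have h22 : ((d - 1 : ℕ) : ℝ) = (d : ℝ) - 1 := by
        rw [Nat.cast_sub hd, Nat.cast_one]
      rw [h21, h22]
    have hdr : (1:ℝ) ≤ d := by exact_mod_cast hd
    have hpnn : (0:ℝ) ≤ (1 - g) ^ (d + 1) := pow_nonneg h1g _
    have hnn1 : (0:ℝ) ≤ ((d:ℝ) - 1) * (g * (1 - g) ^ (d + 1)) := by
      apply mul_nonneg (by linarith) (mul_nonneg hg0 hpnn)
    rw [hcast, ← ENNReal.ofReal_mul (by linarith), ← ENNReal.ofReal_add hpnn hnn1]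
    congr 1
    ring
  refine ⟨hmain, ?_⟩
  rw [hmain]
  apply ENNReal.ofReal_le_ofReal
  have hdr : (1:ℝ) ≤ d := by exact_mod_cast hd
  have hpow : (0:ℝ) ≤ (1-g)^d := pow_nonneg h1g d
  have hps : (1-g)^(d+1) = (1-g) * (1-g)^d := by ring
  rw [hps]
  nlinarith [mul_nonneg hg0 hpow, mul_nonneg (mul_nonneg (sub_nonneg.mpr hdr) (mul_nonneg hg0 hg0)) hpow]

end
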